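/- For every integer n ≥ 10, the spider Sp(2^[n]) admits no local antimagic total labeling whose induced vertex weights take exactly 2 distinct values; that is, χ_lat(Sp(2^[n])) ≥ 3 for n ≥ 10. (The key inequality is: if such a 2-labeling existed, then (n+1)(n+2)/2 ≤ w(x) ≤ (6n+3), forcing n² − 9n − 4 ≤ 0 and hence n ≤ 9.) -/

import Mathlib

open Finset

variable {V : Type*} [Fintype V] [DecidableEq V]

/-- The weight of a vertex `u` under the total labeling given by vertex labels `fv`
and edge labels `fe` : `w(u) = f(u) + \sum_{e incident to u} f(e)`. -/
def latWeight (G : SimpleGraph V) [DecidableRel G.Adj]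
    (fv : V → ℕ) (fe : Sym2 V → ℕ) (u : V) : ℕ :=
  fv u + ∑ v ∈ G.neighborFinset u, fe s(u, v)

/-- `fv, fe` together form a bijection from `V(G) ∪ E(G)` onto `{1, …, p + q}`,
where `p` is the order and `q` is the size of `G`. -/
def IsTotalLabeling (G : SimpleGraph V) [DecidableRel G.Adj]
    (fv : V → ℕ) (fe : Sym2 V → ℕ) : Prop :=
  Set.BijOn (Sum.elim fv (fun e : G.edgeSet => fe (e : Sym2 V))) Set.univ
    (Set.Icc 1 (Fintype.card V + G.edgeFinset.card))

/-- A local antimagic total labeling of `G` : a bijective total labeling such that any two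
adjacent vertices get distinct weights. -/
def IsLocalAntimagicTotal (G : SimpleGraph V) [DecidableRel G.Adj]
    (fv : V → ℕ) (fe : Sym2 V → ℕ) : Prop :=
  IsTotalLabeling G fv fe ∧
    ∀ ⦃u v : V⦄, G.Adj u v → latWeight G fv fe u ≠ latWeight G fv fe v

/-- The local antimagic total chromatic number `χ_lat(G)` : the minimum number of distinct
vertex weights taken over all local antimagic total labelings of `G`. -/
noncomputable def chiLat (G : SimpleGraph V) [DecidableRel G.Adj] : ℕ :=
  sInf {c | ∃ fv fe, IsLocalAntimagicTotal G fv fe ∧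
    (Finset.univ.image (latWeight G fv fe)).card = c}

instance {W : Type*} (r : W → W → Prop) [DecidableEq W] [DecidableRel r] :
    DecidableRel (SimpleGraph.fromRel r).Adj :=
  fun a b => decidable_of_iff _ (SimpleGraph.fromRel_adj r a b).symm

/-- Adjacency for the spider `Sp(2^[n])` : the center `none` is adjacent to each middle
vertex `some (i, false)`, and `some (i, false)` is adjacent to the leaf `some (i, true)`. -/
def spider2R (n : ℕ) : Option (Fin n × Bool) → Option (Fin n × Bool) → Bool
  | none, some (_, false) => true
  | some (i, false), some (j, true) => decide (i = j)
  | _, _ => false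

/-- The spider `Sp(2^[n])` with `n` legs of length `2`. -/
abbrev spider2 (n : ℕ) : SimpleGraph (Option (Fin n × Bool)) :=
  SimpleGraph.fromRel (fun a b => spider2R n a b = true)

set_option linter.unnecessarySeqFocus false

lemma adj_iff (n : ℕ) (a b : Option (Fin n × Bool)) :
    (spider2 n).Adj a b ↔ ∃ i : Fin n,
      (a = none ∧ b = some (i, false)) ∨ (b = none ∧ a = some (i, false)) ∨
      (a = some (i, false) ∧ b = some (i, true)) ∨ (a = some (i, true) ∧ b = some (i, false)) := by
  rw [SimpleGraph.fromRel_adj]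
  rcases a with _ | ⟨i, _ | _⟩ <;> rcases b with _ | ⟨j, _ | _⟩ <;>
    simp [spider2R] <;> aesop

lemma adj1 (n : ℕ) (i : Fin n) : (spider2 n).Adj none (some (i, false)) := by
  rw [adj_iff]; exact ⟨i, Or.inl ⟨rfl, rfl⟩⟩

lemma adj2 (n : ℕ) (i : Fin n) : (spider2 n).Adj (some (i, false)) (some (i, true)) := by
  rw [adj_iff]; exact ⟨i, Or.inr (Or.inr (Or.inl ⟨rfl, rfl⟩))⟩

lemma nbr_none (n : ℕ) : (spider2 n).neighborFinset none
    = univ.image (fun i : Fin n => (some (i, false) : Option (Fin n × Bool))) := by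
  ext b
  simp only [SimpleGraph.mem_neighborFinset, adj_iff, mem_image, mem_univ, true_and]
  constructor
  · rintro ⟨i, ⟨-, rfl⟩ | ⟨-, h⟩ | ⟨h, -⟩ | ⟨h, -⟩⟩
    · exact ⟨i, rfl⟩
    all_goals simp at h
  · rintro ⟨i, rfl⟩; exact ⟨i, by simp⟩

lemma nbr_mid (n : ℕ) (i : Fin n) : (spider2 n).neighborFinset (some (i, false))
    = {none, some (i, true)} := by
  ext b
  simp only [SimpleGraph.mem_neighborFinset, adj_iff, mem_insert, mem_singleton]
  constructor
  · rintro ⟨j, h⟩; rcases h with ⟨h, -⟩ | ⟨h, h2⟩ | ⟨h, h2⟩ | ⟨h, -⟩ <;> simp_all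
  · rintro (rfl | rfl)
    · exact ⟨i, Or.inr (Or.inl ⟨rfl, rfl⟩)⟩
    · exact ⟨i, Or.inr (Or.inr (Or.inl ⟨rfl, rfl⟩))⟩

lemma nbr_leaf (n : ℕ) (i : Fin n) : (spider2 n).neighborFinset (some (i, true))
    = {some (i, false)} := by
  ext b
  simp only [SimpleGraph.mem_neighborFinset, adj_iff, mem_singleton]
  constructor
  · rintro ⟨j, h⟩; rcases h with ⟨h, -⟩ | ⟨-, h⟩ | ⟨h, -⟩ | ⟨h, h2⟩ <;> simp_all
  · rintro rfl; exact ⟨i, Or.inr (Or.inr (Or.inr ⟨rfl, rfl⟩))⟩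

lemma card_V (n : ℕ) : Fintype.card (Option (Fin n × Bool)) = 2 * n + 1 := by
  simp [Fintype.card_option, Fintype.card_prod]; ring

lemma card_E (n : ℕ) : (spider2 n).edgeFinset.card = 2 * n := by
  have h := SimpleGraph.sum_degrees_eq_twice_card_edges (spider2 n)
  rw [Fintype.sum_option] at h
  have h1 : (spider2 n).degree none = n := by
    rw [← SimpleGraph.card_neighborFinset_eq_degree, nbr_none,
      Finset.card_image_of_injective _ (by intro a b hab; simpa using hab)]
    simp
  have h2 : ∀ p : Fin n × Bool, (spider2 n).degree (some p) = if p.2 then 1 else 2 := by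
    rintro ⟨i, _ | _⟩
    · rw [← SimpleGraph.card_neighborFinset_eq_degree, nbr_mid]; simp
    · rw [← SimpleGraph.card_neighborFinset_eq_degree, nbr_leaf]; simp
  rw [h1] at h
  rw [Finset.sum_congr rfl (fun p _ => h2 p)] at h
  rw [Fintype.sum_prod_type] at h
  norm_num [Fintype.sum_bool, Finset.sum_const, Fintype.card_fin] at h
  have he : (Finset.filter (Membership.mem (spider2 n).edgeSet) Finset.univ)
      = (spider2 n).edgeFinset := by
    ext e; simp [SimpleGraph.mem_edgeFinset]
  omega

lemma sum_lower : ∀ (m : ℕ) (T : Finset ℕ), T.card = m → (∀ t ∈ T, 1 ≤ t) →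
    ∑ k ∈ range m, (k + 1) ≤ ∑ t ∈ T, t := by
  intro m
  induction m with
  | zero => intro T h _; simp
  | succ m ih =>
    intro T hcard h1
    have hne : T.Nonempty := by rw [← Finset.card_pos, hcard]; omega
    set M := T.max' hne with hM
    have hMem : M ∈ T := T.max'_mem hne
    have hsub : T ⊆ Finset.Icc 1 M := by
      intro t ht; rw [Finset.mem_Icc]; exact ⟨h1 t ht, T.le_max' t ht⟩
    have hMb : m + 1 ≤ M := by
      have := Finset.card_le_card hsub
      rw [hcard, Nat.card_Icc] at this; omega
    have herase : (T.erase M).card = m := by rw [Finset.card_erase_of_mem hMem, hcard]; omega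
    have h2 := ih (T.erase M) herase (fun t ht => h1 t (Finset.mem_of_mem_erase ht))
    rw [Finset.sum_range_succ, ← Finset.add_sum_erase _ _ hMem]
    omega

lemma sum_upper (N : ℕ) (T : Finset ℕ) (hsub : T ⊆ Finset.Icc 1 N) :
    (∑ t ∈ T, t) + ∑ k ∈ range (N - T.card), (k + 1) ≤ ∑ t ∈ Finset.Icc 1 N, t := by
  have hcard : T.card ≤ N := by
    have := Finset.card_le_card hsub; rwa [Nat.card_Icc] at this
  have hsd : ((Finset.Icc 1 N) \ T).card = N - T.card := by
    rw [Finset.card_sdiff_of_subset hsub, Nat.card_Icc]; omega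
  have h2 := sum_lower (N - T.card) ((Finset.Icc 1 N) \ T) hsd
    (fun t ht => (Finset.mem_Icc.1 (Finset.mem_sdiff.1 ht).1).1)
  have h3 : ∑ t ∈ (Finset.Icc 1 N) \ T, t + ∑ t ∈ T, t = ∑ t ∈ Finset.Icc 1 N, t :=
    Finset.sum_sdiff hsub
  omega

lemma gauss (m : ℕ) : 2 * ∑ k ∈ range m, (k + 1) = m * (m + 1) := by
  induction m with
  | zero => simp
  | succ m ih => rw [Finset.sum_range_succ, Nat.mul_add, ih]; ring

lemma gauss_Icc (N : ℕ) : 2 * ∑ t ∈ Finset.Icc 1 N, t = N * (N + 1) := by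
  induction N with
  | zero => simp
  | succ N ih =>
    rw [Finset.sum_Icc_succ_top (by omega), Nat.mul_add, ih]; ring

lemma edge_cases (n : ℕ) (e : Sym2 (Option (Fin n × Bool))) (he : e ∈ (spider2 n).edgeSet) :
    ∃ i : Fin n, e = s(none, some (i, false)) ∨ e = s(some (i, false), some (i, true)) := by
  induction e with
  | _ a b =>
    rw [SimpleGraph.mem_edgeSet, adj_iff] at he
    obtain ⟨i, h⟩ := he
    refine ⟨i, ?_⟩
    rcases h with ⟨rfl, rfl⟩ | ⟨rfl, rfl⟩ | ⟨rfl, rfl⟩ | ⟨rfl, rfl⟩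
    · exact Or.inl rfl
    · exact Or.inl (Sym2.eq_swap)
    · exact Or.inr rfl
    · exact Or.inr (Sym2.eq_swap)

def cfv (n : ℕ) : Option (Fin n × Bool) → ℕ
  | none => 3 * n + 1
  | some (i, false) => 2 * n + 1 + i
  | some (i, true) => n + 1 + i

def cg (n : ℕ) : Option (Fin n × Bool) → Option (Fin n × Bool) → ℕ
  | none, some (i, false) => 3 * n + 2 + i
  | some (i, false), some (j, true) => if i = j then (i : ℕ) + 1 else 0
  | _, _ => 0

def cfe (n : ℕ) : Sym2 (Option (Fin n × Bool)) → ℕ :=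
  Sym2.lift ⟨fun a b => cg n a b + cg n b a, fun a b => by dsimp; omega⟩

lemma cfe_E0 (n : ℕ) (i : Fin n) : cfe n s(none, some (i, false)) = 3 * n + 2 + i := by
  simp [cfe, cg]

lemma cfe_E0' (n : ℕ) (i : Fin n) : cfe n s(some (i, false), none) = 3 * n + 2 + i := by
  simp [cfe, cg]

lemma cfe_E1 (n : ℕ) (i : Fin n) : cfe n s(some (i, false), some (i, true)) = (i : ℕ) + 1 := by
  simp [cfe, cg]

lemma cfe_E1' (n : ℕ) (i : Fin n) : cfe n s(some (i, true), some (i, false)) = (i : ℕ) + 1 := by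
  simp [cfe, cg]



lemma w_none (n : ℕ) (fv : Option (Fin n × Bool) → ℕ) (fe : Sym2 (Option (Fin n × Bool)) → ℕ) :
    latWeight (spider2 n) fv fe none
      = fv none + ∑ i : Fin n, fe s(none, some (i, false)) := by
  rw [latWeight, nbr_none, Finset.sum_image (by intro a _ b _ h; simpa using h)]

lemma w_mid (n : ℕ) (fv : Option (Fin n × Bool) → ℕ) (fe : Sym2 (Option (Fin n × Bool)) → ℕ)
    (i : Fin n) : latWeight (spider2 n) fv fe (some (i, false))
      = fv (some (i, false)) + (fe s(some (i, false), none)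
          + fe s(some (i, false), some (i, true))) := by
  rw [latWeight, nbr_mid, Finset.sum_pair (by simp)]

lemma w_leaf (n : ℕ) (fv : Option (Fin n × Bool) → ℕ) (fe : Sym2 (Option (Fin n × Bool)) → ℕ)
    (i : Fin n) : latWeight (spider2 n) fv fe (some (i, true))
      = fv (some (i, true)) + fe s(some (i, false), some (i, true)) := by
  rw [latWeight, nbr_leaf, Finset.sum_singleton, Sym2.eq_swap]

lemma cw_none (n : ℕ) :
    latWeight (spider2 n) (cfv n) (cfe n) none = 3 * n + 1 + ∑ i : Fin n, (3 * n + 2 + ↑i) := by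
  rw [w_none]
  simp only [cfe_E0]
  rfl

lemma cw_none_ge (n : ℕ) :
    3 * n + 1 + n * (3 * n + 2) ≤ latWeight (spider2 n) (cfv n) (cfe n) none := by
  rw [cw_none]
  have : n * (3 * n + 2) = ∑ _i : Fin n, (3 * n + 2) := by
    rw [Finset.sum_const, Finset.card_univ, Fintype.card_fin, smul_eq_mul]
  rw [this]
  exact Nat.add_le_add_left (Finset.sum_le_sum fun i _ => by omega) _

lemma cw_mid (n : ℕ) (i : Fin n) :
    latWeight (spider2 n) (cfv n) (cfe n) (some (i, false)) = 5 * n + 4 + 3 * ↑i := by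
  rw [w_mid, cfe_E0', cfe_E1]
  simp only [cfv]
  omega

lemma cw_leaf (n : ℕ) (i : Fin n) :
    latWeight (spider2 n) (cfv n) (cfe n) (some (i, true)) = n + 2 + 2 * ↑i := by
  rw [w_leaf, cfe_E1]
  simp only [cfv]
  omega

lemma construction (n : ℕ) (hn : 10 ≤ n) :
    IsLocalAntimagicTotal (spider2 n) (cfv n) (cfe n) := by
  have hcards : Fintype.card (Option (Fin n × Bool)) + (spider2 n).edgeFinset.card = 4 * n + 1 := by
    rw [card_V, card_E]; omega
  constructor
  · rw [IsTotalLabeling, hcards]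
    clear hcards
    refine ⟨?_, ?_, ?_⟩
    · -- MapsTo
      rintro (v | e) -
      · rcases v with _ | ⟨⟨i, hi⟩, _ | _⟩ <;> simp [cfv, Set.mem_Icc] <;> omega
      · obtain ⟨i, h | h⟩ := edge_cases n (↑e) e.2 <;>
          · have hi := i.isLt
            simp only [Sum.elim_inr, h, cfe_E0, cfe_E1, Set.mem_Icc]
            omega
    · -- InjOn
      apply Function.Injective.injOn
      rintro (a | e) (b | f) h
      · simp only [Sum.elim_inl] at h
        have hab : a = b := by
          rcases a with _ | ⟨⟨i, hi⟩, _ | _⟩ <;> rcases b with _ | ⟨⟨j, hj⟩, _ | _⟩ <;>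
            simp only [cfv] at h <;>
            first
              | rfl
              | (exfalso; omega)
              | (simp only [Option.some.injEq, Prod.mk.injEq, Fin.mk.injEq];
                  exact ⟨by omega, trivial⟩)
        rw [hab]
      · exfalso
        simp only [Sum.elim_inl, Sum.elim_inr] at h
        obtain ⟨i, hf | hf⟩ := edge_cases n (↑f) f.2 <;>
          · have hi := i.isLt
            rw [hf] at h
            rcases a with _ | ⟨⟨j, hj⟩, _ | _⟩ <;>
              simp only [cfv, cfe_E0, cfe_E1] at h <;> omega
      · exfalso
        simp only [Sum.elim_inl, Sum.elim_inr] at h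
        obtain ⟨i, hf | hf⟩ := edge_cases n (↑e) e.2 <;>
          · have hi := i.isLt
            rw [hf] at h
            rcases b with _ | ⟨⟨j, hj⟩, _ | _⟩ <;>
              simp only [cfv, cfe_E0, cfe_E1] at h <;> omega
      · simp only [Sum.elim_inr] at h
        obtain ⟨i, he | he⟩ := edge_cases n (↑e) e.2 <;>
          obtain ⟨j, hf | hf⟩ := edge_cases n (↑f) f.2 <;>
            have hi := i.isLt <;> have hj := j.isLt <;>
            rw [he, hf] at h <;> simp only [cfe_E0, cfe_E1] at h
        · have : i = j := Fin.ext (by omega)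
          subst this
          exact congrArg _ (Subtype.ext (he.trans hf.symm))
        · omega
        · omega
        · have : i = j := Fin.ext (by omega)
          subst this
          exact congrArg _ (Subtype.ext (he.trans hf.symm))
    · -- SurjOn
      intro m hm
      simp only [Set.mem_Icc] at hm
      rw [Set.image_univ]
      rcases Nat.lt_or_ge m (n + 1) with h1 | h1
      · exact ⟨Sum.inr ⟨s(some (⟨m - 1, by omega⟩, false), some (⟨m - 1, by omega⟩, true)),
          (spider2 n).mem_edgeSet.2 (adj2 n _)⟩, by simp only [Sum.elim_inr, cfe_E1]; omega⟩
      rcases Nat.lt_or_ge m (2 * n + 1) with h2 | h2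
      · exact ⟨Sum.inl (some (⟨m - n - 1, by omega⟩, true)), by simp only [Sum.elim_inl, cfv]; omega⟩
      rcases Nat.lt_or_ge m (3 * n + 1) with h3 | h3
      · exact ⟨Sum.inl (some (⟨m - 2 * n - 1, by omega⟩, false)),
          by simp only [Sum.elim_inl, cfv]; omega⟩
      rcases Nat.lt_or_ge m (3 * n + 2) with h4 | h4
      · exact ⟨Sum.inl none, by simp only [Sum.elim_inl, cfv]; omega⟩
      · exact ⟨Sum.inr ⟨s(none, some (⟨m - 3 * n - 2, by omega⟩, false)),
          (spider2 n).mem_edgeSet.2 (adj1 n _)⟩, by simp only [Sum.elim_inr, cfe_E0]; omega⟩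
  · -- antimagic
    have key1 : ∀ i : Fin n, latWeight (spider2 n) (cfv n) (cfe n) none
        ≠ latWeight (spider2 n) (cfv n) (cfe n) (some (i, false)) := by
      intro i
      have h1 := cw_none_ge n
      have h2 := cw_mid n i
      have hi := i.isLt
      have hmul : 10 * (3 * n + 2) ≤ n * (3 * n + 2) := Nat.mul_le_mul_right _ hn
      omega
    have key2 : ∀ i : Fin n, latWeight (spider2 n) (cfv n) (cfe n) (some (i, false))
        ≠ latWeight (spider2 n) (cfv n) (cfe n) (some (i, true)) := by
      intro i
      rw [cw_mid, cw_leaf]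
      omega
    intro u v huv
    rw [adj_iff] at huv
    obtain ⟨i, ⟨rfl, rfl⟩ | ⟨rfl, rfl⟩ | ⟨rfl, rfl⟩ | ⟨rfl, rfl⟩⟩ := huv
    · exact key1 i
    · exact (key1 i).symm
    · exact key2 i
    · exact (key2 i).symm



lemma no_two (n : ℕ) (hn : 10 ≤ n) (fv : Option (Fin n × Bool) → ℕ)
    (fe : Sym2 (Option (Fin n × Bool)) → ℕ)
    (hL : IsLocalAntimagicTotal (spider2 n) fv fe) :
    (Finset.univ.image (latWeight (spider2 n) fv fe)).card ≠ 2 := by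
  intro h2
  obtain ⟨hbij, hanti⟩ := hL
  have hcards : Fintype.card (Option (Fin n × Bool)) + (spider2 n).edgeFinset.card
      = 4 * n + 1 := by rw [card_V, card_E]; omega
  rw [IsTotalLabeling, hcards] at hbij
  clear hcards
  have hinjF : Function.Injective
      (Sum.elim fv (fun e : (spider2 n).edgeSet => fe (e : Sym2 _))) :=
    Set.injOn_univ.1 hbij.injOn
  have hmap : ∀ x, Sum.elim fv (fun e : (spider2 n).edgeSet => fe (e : Sym2 _)) x
      ∈ Set.Icc 1 (4 * n + 1) := fun x => hbij.mapsTo (Set.mem_univ x)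
  set w := latWeight (spider2 n) fv fe with hw
  -- basic label facts
  have hfvb : ∀ v, 1 ≤ fv v ∧ fv v ≤ 4 * n + 1 := fun v => hmap (Sum.inl v)
  have hfeb : ∀ e (he : e ∈ (spider2 n).edgeSet), 1 ≤ fe e ∧ fe e ≤ 4 * n + 1 :=
    fun e he => hmap (Sum.inr ⟨e, he⟩)
  have hfvfe : ∀ v e (he : e ∈ (spider2 n).edgeSet), fv v ≠ fe e := by
    intro v e he h
    have : (Sum.inl v : Option (Fin n × Bool) ⊕ (spider2 n).edgeSet) = Sum.inr ⟨e, he⟩ :=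
      hinjF (by simpa using h)
    simp at this
  have hfvinj : Function.Injective fv := by
    intro u v h
    have : (Sum.inl u : Option (Fin n × Bool) ⊕ (spider2 n).edgeSet) = Sum.inl v :=
      hinjF (by simpa using h)
    simpa using this
  have hfeinj : ∀ e f (he : e ∈ (spider2 n).edgeSet) (hf : f ∈ (spider2 n).edgeSet),
      fe e = fe f → e = f := by
    intro e f he hf h
    have : (Sum.inr ⟨e, he⟩ : Option (Fin n × Bool) ⊕ (spider2 n).edgeSet)
        = Sum.inr ⟨f, hf⟩ := hinjF (by simpa using h)
    simpa [Subtype.ext_iff] using this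
  -- two weight values
  obtain ⟨a, b, hab, hW⟩ := Finset.card_eq_two.1 h2
  have hmemW : ∀ v, w v = a ∨ w v = b := by
    intro v
    have : w v ∈ Finset.univ.image w := Finset.mem_image_of_mem w (Finset.mem_univ v)
    rw [hW] at this
    simpa using this
  have key : ∀ i : Fin n, w (some (i, true)) = w none := by
    intro i
    have h0 := hmemW none
    have h1 := hmemW (some (i, false))
    have h2 := hmemW (some (i, true))
    have d1 := hanti (adj1 n i)
    have d2 := hanti (adj2 n i)
    rcases h0 with h0 | h0 <;> rcases h1 with h1 | h1 <;> rcases h2 with h2 | h2 <;> omega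
  -- lower bound on w none
  have hE0 : ∀ i : Fin n, s(none, some (i, false)) ∈ (spider2 n).edgeSet :=
    fun i => (spider2 n).mem_edgeSet.2 (adj1 n i)
  have hE1 : ∀ i : Fin n, s(some (i, false), some (i, true)) ∈ (spider2 n).edgeSet :=
    fun i => (spider2 n).mem_edgeSet.2 (adj2 n i)
  set g0 : Fin n → ℕ := fun i => fe s(none, some (i, false)) with hg0
  have hg0inj : Function.Injective g0 := by
    intro i j h
    have := hfeinj _ _ (hE0 i) (hE0 j) h
    rw [Sym2.congr_right] at this
    simpa using this
  set S1 : Finset ℕ := insert (fv none) (Finset.univ.image g0) with hS1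
  have hnm : fv none ∉ Finset.univ.image g0 := by
    rw [Finset.mem_image]
    rintro ⟨i, -, h⟩
    exact hfvfe none _ (hE0 i) h.symm
  have hS1card : S1.card = n + 1 := by
    rw [hS1, Finset.card_insert_of_notMem hnm, Finset.card_image_of_injective _ hg0inj]
    simp
  have hS1sum : ∑ t ∈ S1, t = w none := by
    rw [hS1, Finset.sum_insert hnm, Finset.sum_image (fun x _ y _ h => hg0inj h), hw, w_none]
  have hlow : ∑ k ∈ range (n + 1), (k + 1) ≤ w none := by
    rw [← hS1sum]
    apply sum_lower _ _ hS1card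
    intro t ht
    rw [hS1, Finset.mem_insert, Finset.mem_image] at ht
    rcases ht with rfl | ⟨i, -, rfl⟩
    · exact (hfvb none).1
    · exact (hfeb _ (hE0 i)).1
  -- upper bound on n * w none
  set g1 : Fin n → ℕ := fun i => fv (some (i, true)) with hg1
  set g2 : Fin n → ℕ := fun i => fe s(some (i, false), some (i, true)) with hg2
  have hg1inj : Function.Injective g1 := by
    intro i j h
    have := hfvinj h
    simpa using this
  have hg2inj : Function.Injective g2 := by
    intro i j h
    have := hfeinj _ _ (hE1 i) (hE1 j) h
    rw [Sym2.eq_iff] at this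
    rcases this with ⟨h1, -⟩ | ⟨h1, -⟩ <;> simp_all
  set S2 : Finset ℕ := (Finset.univ.image g1) ∪ (Finset.univ.image g2) with hS2
  have hdisj : Disjoint (Finset.univ.image g1) (Finset.univ.image g2) := by
    rw [Finset.disjoint_left]
    rintro x hx1 hx2
    rw [Finset.mem_image] at hx1 hx2
    obtain ⟨i, -, rfl⟩ := hx1
    obtain ⟨j, -, hj⟩ := hx2
    exact hfvfe _ _ (hE1 j) hj.symm
  have hS2card : S2.card = 2 * n := by
    rw [hS2, Finset.card_union_of_disjoint hdisj,
      Finset.card_image_of_injective _ hg1inj, Finset.card_image_of_injective _ hg2inj]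
    simp; omega
  have hS2sum : ∑ t ∈ S2, t = n * w none := by
    rw [hS2, Finset.sum_union hdisj, Finset.sum_image (fun x _ y _ h => hg1inj h),
      Finset.sum_image (fun x _ y _ h => hg2inj h), ← Finset.sum_add_distrib]
    have : ∀ i : Fin n, g1 i + g2 i = w none := by
      intro i
      rw [← key i, hw, w_leaf]
    rw [Finset.sum_congr rfl fun i _ => this i]
    simp [mul_comm]
  have hS2sub : S2 ⊆ Finset.Icc 1 (4 * n + 1) := by
    intro t ht
    rw [hS2, Finset.mem_union, Finset.mem_image, Finset.mem_image] at ht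
    rw [Finset.mem_Icc]
    rcases ht with ⟨i, -, rfl⟩ | ⟨i, -, rfl⟩
    · exact hfvb _
    · exact hfeb _ (hE1 i)
  have hup := sum_upper (4 * n + 1) S2 hS2sub
  rw [hS2sum, hS2card] at hup
  have e1 : 4 * n + 1 - 2 * n = 2 * n + 1 := by omega
  rw [e1] at hup
  -- numerics
  have g1' := gauss (n + 1)
  have g2' := gauss (2 * n + 1)
  have g3' := gauss_Icc (4 * n + 1)
  have hmul : n * (2 * ∑ k ∈ range (n + 1), (k + 1)) ≤ n * (2 * w none) :=
    Nat.mul_le_mul_left _ (Nat.mul_le_mul_left _ hlow)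
  rw [g1'] at hmul
  have hnn : 10 * n ≤ n * n := Nat.mul_le_mul_right n hn
  have hnnn : 10 * (n * n) ≤ n * (n * n) := Nat.mul_le_mul_right (n * n) hn
  nlinarith [hup, hmul, g2', g3', hn, hnn, hnnn]

/-- For every `n ≥ 10`, the spider `Sp(2^[n])` admits no local antimagic total labeling whose
induced vertex weights take exactly `2` distinct values; that is, `χ_lat(Sp(2^[n])) ≥ 3`. -/
theorem spider2_no_two_weights (n : ℕ) (hn : 10 ≤ n) :
    (∀ fv fe, IsLocalAntimagicTotal (spider2 n) fv fe →
      (Finset.univ.image (latWeight (spider2 n) fv fe)).card ≠ 2) ∧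
    3 ≤ chiLat (spider2 n) := by
  refine ⟨fun fv fe hL => no_two n hn fv fe hL, ?_⟩
  have hne : {c | ∃ fv fe, IsLocalAntimagicTotal (spider2 n) fv fe ∧
      (Finset.univ.image (latWeight (spider2 n) fv fe)).card = c}.Nonempty :=
    ⟨_, cfv n, cfe n, construction n hn, rfl⟩
  obtain ⟨fv, fe, hL, hc⟩ := Nat.sInf_mem hne
  have h2 : (Finset.univ.image (latWeight (spider2 n) fv fe)).card ≠ 2 :=
    no_two n hn fv fe hL
  have h0 : (Finset.univ.image (latWeight (spider2 n) fv fe)).card ≠ 0 := by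
    simp [Finset.card_eq_zero, Finset.image_eq_empty, Finset.univ_eq_empty_iff]
  have h1 : (Finset.univ.image (latWeight (spider2 n) fv fe)).card ≠ 1 := by
    intro h1
    obtain ⟨x, hx⟩ := Finset.card_eq_one.1 h1
    have ha := hL.2 (adj1 n ⟨0, by omega⟩)
    have w1 : latWeight (spider2 n) fv fe none ∈ Finset.univ.image (latWeight (spider2 n) fv fe) :=
      Finset.mem_image_of_mem _ (Finset.mem_univ _)
    have w2 : latWeight (spider2 n) fv fe (some (⟨0, by omega⟩, false))
        ∈ Finset.univ.image (latWeight (spider2 n) fv fe) :=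
      Finset.mem_image_of_mem _ (Finset.mem_univ _)
    rw [hx, Finset.mem_singleton] at w1 w2
    exact ha (w1.trans w2.symm)
  unfold chiLat
  omega
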